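/- Let B_t ⊆ G be an admissible family: O_ε·B_t·O_ε ⊆ B_{t+cε} for all t ≥ t₀, 0 < ε < ε₀, where O_ε is the ε-ball around the identity. Let Γ' ≤ G be discrete, y ∈ G, χ_ε = 1_{O_ε}/vol(O_ε), and φ^y_ε(gΓ') = ∑_{γ∈Γ'} χ_ε(gγy). Then for every h ∈ O_ε: ∫_{B_{t−cε}} φ^y_ε(g^{−1}hΓ') dvol(g) ≤ |B_t ∩ Γ'y| ≤ ∫_{B_{t+cε}} φ^y_ε(g^{−1}hΓ') dvol(g). -/

import Mathlib

open MeasureTheory Pointwise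
open scoped ENNReal NNReal

/-- Lemma 3.5: counting versus averaging.  Let `G` carry a Haar measure `vol`
(inverse-invariant, i.e. `G` unimodular in the relevant sense) and a left-invariant
metric; let `B t` be an admissible family (`O_ε · B_t · O_ε ⊆ B_{t+cε}`), `Γ'` a
discrete (countable) subgroup, `y ∈ G`, `χ_ε = 1_{O_ε}/vol(O_ε)` and
`φ^y_ε(x) = ∑_{γ ∈ Γ'} χ_ε(x γ y)`.  Then for every `h ∈ O_ε`,
`∫_{B_{t−cε}} φ^y_ε(g⁻¹h) dvol(g) ≤ |B_t ∩ Γ'y| ≤ ∫_{B_{t+cε}} φ^y_ε(g⁻¹h) dvol(g)`. -/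
theorem stmt18 {G : Type*} [Group G] [MetricSpace G] [IsTopologicalGroup G]
    [MeasurableSpace G] [BorelSpace G]
    (vol : Measure G) [vol.IsHaarMeasure] [vol.IsInvInvariant]
    (hdist : ∀ g x y : G, dist (g * x) (g * y) = dist x y)
    (B : ℝ → Set G) (hBmeas : ∀ t, MeasurableSet (B t))
    (t₀ ε₀ c : ℝ) (hc : 0 < c) (hε₀ : 0 < ε₀)
    (hadm : ∀ t, t₀ ≤ t → ∀ ε, 0 < ε → ε ≤ ε₀ →
      Metric.ball (1 : G) ε * B t * Metric.ball (1 : G) ε ⊆ B (t + c * ε))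
    (Γ' : Subgroup G) [Countable Γ'] (y : G)
    (hfin : ∀ t, (B t ∩ (· * y) '' (Γ' : Set G)).Finite)
    (ε t : ℝ) (hε : 0 < ε) (hεle : ε ≤ ε₀) (ht : t₀ + c * ε₀ ≤ t)
    (hball : 0 < vol (Metric.ball (1 : G) ε))
    (hball' : vol (Metric.ball (1 : G) ε) < ⊤)
    (h : G) (hh : h ∈ Metric.ball (1 : G) ε) :
    (∫ g in B (t - c * ε),
        (∑' γ : Γ', (Metric.ball (1 : G) ε).indicator
          (fun _ => (vol (Metric.ball (1 : G) ε)).toReal⁻¹) (g⁻¹ * h * (γ : G) * y))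
        ∂vol)
      ≤ ((B t ∩ (· * y) '' (Γ' : Set G)).ncard : ℝ) ∧
    ((B t ∩ (· * y) '' (Γ' : Set G)).ncard : ℝ)
      ≤ ∫ g in B (t + c * ε),
          (∑' γ : Γ', (Metric.ball (1 : G) ε).indicator
            (fun _ => (vol (Metric.ball (1 : G) ε)).toReal⁻¹) (g⁻¹ * h * (γ : G) * y))
          ∂vol := by
  -- Abbreviations
  have hO : MeasurableSet (Metric.ball (1:G) ε) := measurableSet_ball
  set O : Set G := Metric.ball (1:G) ε with hOdef
  set cR : ℝ := (vol O).toReal⁻¹ with hcRdef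
  have hVpos : 0 < (vol O).toReal := ENNReal.toReal_pos hball.ne' hball'.ne
  have hcR : 0 ≤ cR := inv_nonneg.mpr hVpos.le
  have hcRV : cR * (vol O).toReal = 1 := inv_mul_cancel₀ hVpos.ne'
  -- symmetry of O
  have hsymm : ∀ x : G, x ∈ O → x⁻¹ ∈ O := by
    intro x hx
    have hd : dist x⁻¹ 1 = dist x 1 := by
      rw [← hdist x x⁻¹ 1, mul_inv_cancel, mul_one, dist_comm]
    simpa [O, Metric.mem_ball, hd] using hx
  -- membership in translates
  have hmemX : ∀ (x g : G), g⁻¹ * x ∈ O ↔ g ∈ x • O := by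
    intro x g
    rw [Set.mem_smul_set_iff_inv_smul_mem, smul_eq_mul]
    constructor
    · intro hx
      have := hsymm _ hx
      simpa [mul_inv_rev] using this
    · intro hx
      have := hsymm _ hx
      simpa [mul_inv_rev] using this
  set X : Γ' → Set G := fun γ => (h * (γ:G) * y) • O with hXdef
  have hXpre : ∀ γ : Γ', X γ = (fun g => (h * (γ:G) * y)⁻¹ * g) ⁻¹' O := by
    intro γ
    ext g
    simp [X, Set.mem_smul_set_iff_inv_smul_mem, smul_eq_mul]
  have hXmeas : ∀ γ : Γ', MeasurableSet (X γ) := by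
    intro γ
    rw [hXpre γ]
    exact hO.preimage (measurable_const_mul _)
  have hXvol : ∀ γ : Γ', vol (X γ) = vol O := by
    intro γ
    rw [hXpre γ, measure_preimage_mul]
  set f : Γ' → G → ℝ := fun γ g => (X γ).indicator (fun _ => cR) g with hfdef
  have hfg : ∀ (γ : Γ') (g : G),
      O.indicator (fun _ => cR) (g⁻¹ * h * (γ:G) * y) = f γ g := by
    intro γ g
    have hx : g⁻¹ * h * (γ:G) * y = g⁻¹ * (h * (γ:G) * y) := by group
    show O.indicator (fun _ => cR) (g⁻¹ * h * (γ:G) * y) = (X γ).indicator (fun _ => cR) g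
    by_cases hg : g ∈ X γ
    · rw [Set.indicator_of_mem hg]
      rw [Set.indicator_of_mem]
      rw [hx, hmemX]
      exact hg
    · rw [Set.indicator_of_notMem hg, Set.indicator_of_notMem]
      rw [hx, hmemX]
      exact hg
  -- finiteness of the counting sets
  have hinj : Function.Injective (fun γ : Γ' => (γ:G) * y) := by
    intro a b hab
    exact Subtype.ext (mul_right_cancel hab)
  have hFfin : ∀ s : ℝ, {γ : Γ' | (γ:G) * y ∈ B s}.Finite := by
    intro s
    have hsub : {γ : Γ' | (γ:G) * y ∈ B s} ⊆
        (fun γ : Γ' => (γ:G) * y) ⁻¹' (B s ∩ (· * y) '' (Γ' : Set G)) := by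
      intro γ hγ
      exact ⟨hγ, ⟨γ, γ.2, rfl⟩⟩
    exact ((hfin s).preimage hinj.injOn).subset hsub
  -- the counting set
  set F : Set Γ' := {γ : Γ' | (γ:G) * y ∈ B t} with hFdef
  have hF : F.Finite := hFfin t
  have himg : (fun γ : Γ' => (γ:G) * y) '' F = B t ∩ (· * y) '' (Γ' : Set G) := by
    ext z
    constructor
    · rintro ⟨γ, hγ, rfl⟩
      exact ⟨hγ, ⟨γ, γ.2, rfl⟩⟩
    · rintro ⟨hz, ⟨g, hg, rfl⟩⟩
      exact ⟨⟨g, hg⟩, hz, rfl⟩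
  have hN : (B t ∩ (· * y) '' (Γ' : Set G)).ncard = F.ncard := by
    rw [← himg, Set.ncard_image_of_injective _ hinj]
  -- arithmetic
  have hcεε₀ : c * ε ≤ c * ε₀ := mul_le_mul_of_nonneg_left hεle hc.le
  have hcε : 0 < c * ε := mul_pos hc hε
  have hcε₀ : 0 < c * ε₀ := mul_pos hc hε₀
  have ht₀m : t₀ ≤ t - c * ε := by linarith
  have ht₀ : t₀ ≤ t := by linarith
  have ht₀p : t₀ ≤ t + c * ε := by linarith
  -- forward inclusion : γ y ∈ B t → X γ ⊆ B (t + c ε)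
  have hsub : ∀ γ : Γ', (γ:G) * y ∈ B t → X γ ⊆ B (t + c * ε) := by
    intro γ hγ g hg
    obtain ⟨u, hu, rfl⟩ := hg
    have hm : (h * ((γ:G) * y)) * u ∈ O * B t * O :=
      Set.mul_mem_mul (Set.mul_mem_mul hh hγ) hu
    have := hadm t ht₀ ε hε hεle hm
    simpa [smul_eq_mul, mul_assoc] using this
  -- backward : nonempty intersection gives membership
  have hback : ∀ (s : ℝ) (γ : Γ'), t₀ ≤ s → (B s ∩ X γ).Nonempty →
      (γ:G) * y ∈ B (s + c * ε) := by
    intro s γ hs ⟨g, hgB, hgX⟩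
    obtain ⟨u, hu, hgu⟩ := hgX
    have hgu' : h * (γ:G) * y * u = g := by rw [← hgu]; simp [smul_eq_mul]
    have hval : (γ:G) * y = h⁻¹ * g * u⁻¹ := by
      rw [← hgu']; group
    have hm : h⁻¹ * g * u⁻¹ ∈ O * B s * O :=
      Set.mul_mem_mul (Set.mul_mem_mul (hsymm h hh) hgB) (hsymm u hu)
    rw [hval]
    exact hadm s hs ε hε hεle hm
  have hsupp₁ : {γ : Γ' | (B (t - c * ε) ∩ X γ).Nonempty}.Finite := by
    apply (hFfin t).subset
    intro γ hγ
    have := hback (t - c * ε) γ ht₀m hγ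
    simpa [sub_add_cancel] using this
  have hsupp₂ : {γ : Γ' | (B (t + c * ε) ∩ X γ).Nonempty}.Finite := by
    apply (hFfin (t + c * ε + c * ε)).subset
    intro γ hγ
    exact hback (t + c * ε) γ ht₀p hγ
  -- main integral identity
  have main : ∀ s : Set G, MeasurableSet s → {γ : Γ' | (s ∩ X γ).Nonempty}.Finite →
      ∫ g in s, (∑' γ : Γ', f γ g) ∂vol
        = ∑' γ : Γ', cR * (vol (s ∩ X γ)).toReal := by
    intro s hs hsupp
    rw [MeasureTheory.integral_tsum]
    · refine tsum_congr fun γ => ?_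
      show ∫ g in s, (X γ).indicator (fun _ => cR) g ∂vol = _
      rw [MeasureTheory.setIntegral_indicator (hXmeas γ),
        MeasureTheory.setIntegral_const, smul_eq_mul, mul_comm]
      rfl
    · exact fun γ => (measurable_const.indicator (hXmeas γ)).aestronglyMeasurable
    · have hterm : ∀ γ : Γ', ∫⁻ g, ‖f γ g‖₊ ∂(vol.restrict s)
          = (‖cR‖₊ : ℝ≥0∞) * vol (X γ ∩ s) := by
        intro γ
        have heq : (fun g => (‖f γ g‖₊ : ℝ≥0∞))
            = (X γ).indicator (fun _ => (‖cR‖₊ : ℝ≥0∞)) := by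
          funext g
          by_cases hg : g ∈ X γ <;>
            simp [hfdef, Set.indicator_of_mem, Set.indicator_of_notMem, hg]
        rw [heq, MeasureTheory.lintegral_indicator_const (hXmeas γ),
          MeasureTheory.Measure.restrict_apply (hXmeas γ)]
      have hzero : ∀ γ ∉ hsupp.toFinset,
          ∫⁻ g, (‖f γ g‖₊ : ℝ≥0∞) ∂(vol.restrict s) = 0 := by
        intro γ hγ
        rw [hterm γ]
        have : s ∩ X γ = ∅ := by
          rw [← Set.not_nonempty_iff_eq_empty]
          simpa using hγ
        rw [Set.inter_comm] at this
        rw [this, measure_empty, mul_zero]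
      simp only [enorm_eq_nnnorm]
      rw [tsum_eq_sum hzero]
      refine (ENNReal.sum_lt_top.2 fun γ _ => ?_).ne
      rw [hterm γ]
      refine ENNReal.mul_lt_top ENNReal.coe_lt_top ?_
      calc vol (X γ ∩ s) ≤ vol (X γ) := measure_mono Set.inter_subset_left
        _ = vol O := hXvol γ
        _ < ⊤ := hball'
  -- bound on each term
  have htermle : ∀ (s : Set G) (γ : Γ'), cR * (vol (s ∩ X γ)).toReal ≤ 1 := by
    intro s γ
    have hle : vol (s ∩ X γ) ≤ vol O := by
      calc vol (s ∩ X γ) ≤ vol (X γ) := measure_mono Set.inter_subset_right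
        _ = vol O := hXvol γ
    have := ENNReal.toReal_mono hball'.ne hle
    calc cR * (vol (s ∩ X γ)).toReal ≤ cR * (vol O).toReal :=
          mul_le_mul_of_nonneg_left this hcR
      _ = 1 := hcRV
  have htermnn : ∀ (s : Set G) (γ : Γ'), 0 ≤ cR * (vol (s ∩ X γ)).toReal := by
    intro s γ
    exact mul_nonneg hcR ENNReal.toReal_nonneg
  simp_rw [hfg]
  rw [hN]
  constructor
  · -- lower integral ≤ count
    rw [main (B (t - c * ε)) (hBmeas _) hsupp₁]
    have hzero : ∀ γ ∉ hF.toFinset,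
        (fun γ : Γ' => cR * (vol (B (t - c * ε) ∩ X γ)).toReal) γ = 0 := by
      intro γ hγ
      have hγ' : γ ∉ F := by simpa using hγ
      have hempty : B (t - c * ε) ∩ X γ = ∅ := by
        rw [← Set.not_nonempty_iff_eq_empty]
        intro hne
        apply hγ'
        have := hback (t - c * ε) γ ht₀m hne
        simpa [sub_add_cancel, hFdef] using this
      simp [hempty]
    rw [tsum_eq_sum hzero]
    calc ∑ γ ∈ hF.toFinset, cR * (vol (B (t - c * ε) ∩ X γ)).toReal
        ≤ hF.toFinset.card • (1:ℝ) :=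
          Finset.sum_le_card_nsmul _ _ _ fun γ _ => htermle _ γ
      _ = (F.ncard : ℝ) := by
          rw [Set.ncard_eq_toFinset_card F hF]
          simp
  · -- count ≤ upper integral
    rw [main (B (t + c * ε)) (hBmeas _) hsupp₂]
    have hsummable : Summable (fun γ : Γ' => cR * (vol (B (t + c * ε) ∩ X γ)).toReal) := by
      apply summable_of_ne_finset_zero (s := hsupp₂.toFinset)
      intro γ hγ
      have hempty : B (t + c * ε) ∩ X γ = ∅ := by
        rw [← Set.not_nonempty_iff_eq_empty]
        simpa using hγ
      simp [hempty]
    have hsum : ∑ γ ∈ hF.toFinset, cR * (vol (B (t + c * ε) ∩ X γ)).toReal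
        = (F.ncard : ℝ) := by
      have : ∀ γ ∈ hF.toFinset, cR * (vol (B (t + c * ε) ∩ X γ)).toReal = 1 := by
        intro γ hγ
        have hγ' : γ ∈ F := by simpa using hγ
        rw [Set.inter_eq_right.mpr (hsub γ hγ')]
        rw [hXvol γ]
        exact hcRV
      rw [Finset.sum_congr rfl this]
      rw [Set.ncard_eq_toFinset_card F hF]
      simp
    rw [← hsum]
    exact Summable.sum_le_tsum hF.toFinset (fun γ _ => htermnn _ γ) hsummable
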